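/- Let a_d, b_d, Δ_d, Δ_{*,d} be sequences of reals with Δ_{*,d} ≥ Δ_d > 0, |b_d| ≤ Δ_{*,d}, and suppose random sequences Â_d, B̂_d satisfy Â_d = Δ_{*,d} + o_p(Δ_d) with Â_d > 0 a.s., and B̂_d = b_d + o_p(Δ_d). Then B̂_d/Â_d = b_d/Δ_{*,d} + o_p(Δ_d/Δ_{*,d}). -/

import Mathlib

open MeasureTheory ProbabilityTheory Filter

lemma stmt_18_alg {A B b Δ Δs δ ε : ℝ} (hΔ : 0 < Δ) (hΔs : Δ ≤ Δs)
    (hb : |b| ≤ Δs) (hδ : δ = min (1/2) (ε/4))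
    (hX : |(A - Δs) / Δ| < δ) (hY : |(B - b) / Δ| < δ) :
    |(B / A - b / Δs) / (Δ / Δs)| < ε := by
  set X := (A - Δs) / Δ with hXdef
  set Y := (B - b) / Δ with hYdef
  have hΔne : Δ ≠ 0 := hΔ.ne'
  have hΔspos : 0 < Δs := lt_of_lt_of_le hΔ hΔs
  have hΔsne : Δs ≠ 0 := hΔspos.ne'
  have hAX : A = Δs + Δ * X := by rw [hXdef, mul_div_cancel₀ _ hΔne]; ring
  have hBY : B = b + Δ * Y := by rw [hYdef, mul_div_cancel₀ _ hΔne]; ring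
  have hXhalf : |X| < 1/2 := lt_of_lt_of_le hX (hδ ▸ min_le_left _ _)
  have hXabs : |Δ * X| ≤ Δs / 2 := by
    rw [abs_mul, abs_of_pos hΔ]
    nlinarith [abs_nonneg X]
  have hApos : Δs / 2 ≤ A := by
    have := (abs_le.mp hXabs).1
    linarith [hAX]
  have hApos' : (0:ℝ) < A := by linarith
  have hAne : A ≠ 0 := ne_of_gt hApos'
  have hZ : (B / A - b / Δs) / (Δ / Δs) = (Y * Δs - b * X) / A := by
    rw [hXdef, hYdef]; field_simp; ring
  rw [hZ, abs_div, abs_of_pos hApos']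
  have hnum : |Y * Δs - b * X| ≤ Δs * (|X| + |Y|) := by
    calc |Y * Δs - b * X| ≤ |Y * Δs| + |b * X| := abs_sub _ _
      _ = |Y| * Δs + |b| * |X| := by rw [abs_mul, abs_mul, abs_of_pos hΔspos]
      _ ≤ |Y| * Δs + Δs * |X| := by nlinarith [abs_nonneg X]
      _ = Δs * (|X| + |Y|) := by ring
  have hδε : 4 * δ ≤ ε := by
    have := min_le_right (1/2 : ℝ) (ε/4); rw [hδ]; linarith
  have h2 : |Y * Δs - b * X| / A ≤ Δs * (|X| + |Y|) / (Δs / 2) := by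
    apply div_le_div₀ (by positivity) hnum (by positivity) hApos
  calc |Y * Δs - b * X| / A ≤ Δs * (|X| + |Y|) / (Δs / 2) := h2
    _ = 2 * (|X| + |Y|) := by field_simp
    _ < ε := by linarith

theorem stmt_18 {Ω : ℕ → Type*} [∀ d, MeasureSpace (Ω d)]
    [∀ d, IsProbabilityMeasure (ℙ : Measure (Ω d))]
    (A B : ∀ d, Ω d → ℝ) (b Δ Δs : ℕ → ℝ)
    (hΔ : ∀ d, 0 < Δ d) (hΔs : ∀ d, Δ d ≤ Δs d) (hb : ∀ d, |b d| ≤ Δs d)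
    (hApos : ∀ d, ∀ᵐ ω, 0 < A d ω)
    (hA : ∀ ε > 0, Tendsto
      (fun d => (ℙ {ω | ε ≤ |(A d ω - Δs d) / Δ d|}).toReal) atTop (nhds 0))
    (hB : ∀ ε > 0, Tendsto
      (fun d => (ℙ {ω | ε ≤ |(B d ω - b d) / Δ d|}).toReal) atTop (nhds 0)) :
    ∀ ε > 0, Tendsto
      (fun d => (ℙ {ω | ε ≤ |(B d ω / A d ω - b d / Δs d) / (Δ d / Δs d)|}).toReal)
      atTop (nhds 0) := by
  intro ε hε
  set δ := min (1/2 : ℝ) (ε/4) with hδ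
  have hδpos : 0 < δ := lt_min (by norm_num) (by linarith)
  have hsub : ∀ d, {ω : Ω d | ε ≤ |(B d ω / A d ω - b d / Δs d) / (Δ d / Δs d)|} ⊆
      {ω | δ ≤ |(A d ω - Δs d) / Δ d|} ∪ {ω | δ ≤ |(B d ω - b d) / Δ d|} := by
    intro d ω hω
    by_contra h
    rw [Set.mem_union] at h
    push_neg at h
    obtain ⟨h1, h2⟩ := h
    simp only [Set.mem_setOf_eq, not_le] at h1 h2
    exact absurd hω (not_le.mpr
      (stmt_18_alg (hΔ d) (hΔs d) (hb d) hδ h1 h2))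
  have hbound : ∀ d, (ℙ {ω : Ω d | ε ≤ |(B d ω / A d ω - b d / Δs d) / (Δ d / Δs d)|}).toReal ≤
      (ℙ {ω : Ω d | δ ≤ |(A d ω - Δs d) / Δ d|}).toReal +
      (ℙ {ω : Ω d | δ ≤ |(B d ω - b d) / Δ d|}).toReal := by
    intro d
    calc (ℙ {ω : Ω d | ε ≤ |(B d ω / A d ω - b d / Δs d) / (Δ d / Δs d)|}).toReal
        ≤ (ℙ ({ω : Ω d | δ ≤ |(A d ω - Δs d) / Δ d|} ∪
            {ω | δ ≤ |(B d ω - b d) / Δ d|})).toReal :=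
          ENNReal.toReal_mono (measure_ne_top _ _) (measure_mono (hsub d))
      _ ≤ _ := by
          rw [← ENNReal.toReal_add (measure_ne_top _ _) (measure_ne_top _ _)]
          exact ENNReal.toReal_mono
            (by exact ENNReal.add_ne_top.mpr ⟨measure_ne_top _ _, measure_ne_top _ _⟩)
            (measure_union_le _ _)
  have hlim : Tendsto (fun d => (ℙ {ω : Ω d | δ ≤ |(A d ω - Δs d) / Δ d|}).toReal +
      (ℙ {ω : Ω d | δ ≤ |(B d ω - b d) / Δ d|}).toReal) atTop (nhds 0) := by
    have := (hA δ hδpos).add (hB δ hδpos)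
    simpa using this
  exact squeeze_zero (fun d => ENNReal.toReal_nonneg) hbound hlim
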